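/- If a random variable X has distribution function F in the Gumbel max-domain of attraction with scaling function w, i.e. P(X > u + x/w(u)) = P(X > u) e^{-x}(1+o(1)) as u → ∞ for all real x, and X_1,...,X_n are i.i.d. copies of X with continuous distribution function, then the r-th order statistic X_{r:n} is also in the Gumbel max-domain of attraction with scaling function w_r(u) = r·w(u), i.e. P(X_{r:n} > u + x/(r w(u))) = P(X_{r:n} > u) e^{-x}(1+o(1)) as u → ∞ for all real x. -/

import Mathlib

open MeasureTheory Filter ProbabilityTheory

lemma countEvent_eq {Ω : Type*} [MeasureSpace Ω] (P : Measure Ω) [IsProbabilityMeasure P]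
    (n r : ℕ) (X : Ω → ℝ) (Xs : Fin n → Ω → ℝ)
    (hmeas : ∀ i, Measurable (Xs i))
    (hindep : iIndepFun Xs P)
    (hident : ∀ i, IdentDistrib (Xs i) X P P) (v : ℝ) :
    (P {ω | r ≤ (Finset.univ.filter fun i : Fin n => v < Xs i ω).card}).toReal
      = (P {ω | v < X ω}).toReal ^ r *
        ∑ S ∈ Finset.univ.filter (fun S : Finset (Fin n) => r ≤ S.card),
          (P {ω | v < X ω}).toReal ^ (S.card - r)
            * (1 - (P {ω | v < X ω}).toReal) ^ (n - S.card) := by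
  classical
  set θ : ENNReal := P {ω | v < X ω} with hθ
  have hθ1 : θ ≤ 1 := prob_le_one
  set E : Finset (Fin n) → Set Ω := fun S =>
    ⋂ i, (if i ∈ S then Xs i ⁻¹' Set.Ioi v else Xs i ⁻¹' Set.Iic v) with hE
  have hEmem : ∀ S ω, ω ∈ E S ↔ (Finset.univ.filter fun i : Fin n => v < Xs i ω) = S := by
    intro S ω
    simp only [hE, Set.mem_iInter]
    constructor
    · intro hω
      ext i
      simp only [Finset.mem_filter, Finset.mem_univ, true_and]
      have hi := hω i
      by_cases hiS : i ∈ S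
      · simp only [hiS, if_true, Set.mem_preimage, Set.mem_Ioi] at hi
        exact ⟨fun _ => hiS, fun _ => hi⟩
      · simp only [hiS, if_false, Set.mem_preimage, Set.mem_Iic] at hi
        exact ⟨fun h => absurd h (not_lt.2 hi), fun h => absurd h hiS⟩
    · intro hfil i
      by_cases hiS : i ∈ S
      · have : v < Xs i ω := by
          have := hfil ▸ hiS
          simpa using (Finset.mem_filter.1 this).2
        simp [hiS, this]
      · have : ¬ v < Xs i ω := by
          intro h
          exact hiS (hfil ▸ (Finset.mem_filter.2 ⟨Finset.mem_univ i, h⟩))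
        simp [hiS, Set.mem_Iic, not_lt.1 this]
  have hset : {ω | r ≤ (Finset.univ.filter fun i : Fin n => v < Xs i ω).card}
      = ⋃ S ∈ Finset.univ.filter (fun S : Finset (Fin n) => r ≤ S.card), E S := by
    ext ω
    simp only [Set.mem_setOf_eq, Set.mem_iUnion, Finset.mem_filter, Finset.mem_univ, true_and]
    constructor
    · intro hcard
      exact ⟨_, hcard, (hEmem _ ω).2 rfl⟩
    · rintro ⟨S, hS, hωS⟩
      rw [(hEmem S ω).1 hωS]
      exact hS
  have hEmeas : ∀ S, MeasurableSet (E S) := by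
    intro S
    refine MeasurableSet.iInter fun i => ?_
    by_cases hiS : i ∈ S
    · simpa [hiS] using (hmeas i) measurableSet_Ioi
    · simpa [hiS] using (hmeas i) measurableSet_Iic
  have hdisj : Set.PairwiseDisjoint
      ↑(Finset.univ.filter (fun S : Finset (Fin n) => r ≤ S.card)) E := by
    intro S _ T _ hST
    refine Set.disjoint_left.2 fun ω hωS hωT => ?_
    exact hST (((hEmem S ω).1 hωS).symm.trans ((hEmem T ω).1 hωT))
  have hPE : ∀ S : Finset (Fin n), P (E S) = θ ^ S.card * (1 - θ) ^ (n - S.card) := by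
    intro S
    have := hindep.meas_iInter (s := fun i =>
        if i ∈ S then Xs i ⁻¹' Set.Ioi v else Xs i ⁻¹' Set.Iic v) (fun i => ?_)
    · rw [hE, this]
      have hfac : ∀ i : Fin n, P (if i ∈ S then Xs i ⁻¹' Set.Ioi v else Xs i ⁻¹' Set.Iic v)
          = if i ∈ S then θ else 1 - θ := by
        intro i
        have h1 : P (Xs i ⁻¹' Set.Ioi v) = θ := by
          rw [hθ, (hident i).measure_mem_eq measurableSet_Ioi]
          rfl
        have h2 : P (Xs i ⁻¹' Set.Iic v) = 1 - θ := by
          have : Xs i ⁻¹' Set.Iic v = (Xs i ⁻¹' Set.Ioi v)ᶜ := by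
            rw [← Set.preimage_compl, Set.compl_Ioi]
          rw [this, prob_compl_eq_one_sub ((hmeas i) measurableSet_Ioi), h1]
        by_cases hiS : i ∈ S <;> simp [hiS, h1, h2]
      rw [Finset.prod_congr rfl (fun i _ => hfac i), Finset.prod_ite, Finset.prod_const,
        Finset.prod_const, Finset.filter_mem_eq_inter, Finset.univ_inter]
      have hc : (Finset.filter (fun x => x ∉ S) Finset.univ).card = n - S.card := by
        rw [show (Finset.filter (fun x => x ∉ S) Finset.univ) = Sᶜ from by
            ext i; simp [Finset.mem_compl], Finset.card_compl, Fintype.card_fin]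
      rw [hc]
    · by_cases hiS : i ∈ S
      · exact ⟨Set.Ioi v, measurableSet_Ioi, by simp [hiS]⟩
      · exact ⟨Set.Iic v, measurableSet_Iic, by simp [hiS]⟩
  rw [hset, measure_biUnion_finset hdisj (fun S _ => hEmeas S)]
  rw [ENNReal.toReal_sum (fun S _ => measure_ne_top P (E S))]
  rw [Finset.mul_sum]
  refine Finset.sum_congr rfl fun S hS => ?_
  have hrS : r ≤ S.card := (Finset.mem_filter.1 hS).2
  rw [hPE S, ENNReal.toReal_mul, ENNReal.toReal_pow, ENNReal.toReal_pow,
    ENNReal.toReal_sub_of_le hθ1 ENNReal.one_ne_top, ENNReal.toReal_one,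
    ← mul_assoc, ← pow_add, Nat.add_sub_cancel' hrS]

/-- If `X` is in the Gumbel max-domain of attraction with scaling function `w`, then the
`r`-th largest order statistic of `n` i.i.d. copies of `X` is in the Gumbel MDA with
scaling function `r * w`. The event `{X_{r:n} > v}` is encoded as "at least `r` of the
`Xs i` exceed `v`". -/
theorem order_statistic_gumbel_mda
    {Ω : Type*} [MeasureSpace Ω] (P : Measure Ω) [IsProbabilityMeasure P]
    (n r : ℕ) (hr : 1 ≤ r) (hrn : r ≤ n)
    (X : Ω → ℝ) (Xs : Fin n → Ω → ℝ)
    (hmeas : ∀ i, Measurable (Xs i))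
    (hindep : iIndepFun Xs P)
    (hident : ∀ i, IdentDistrib (Xs i) X P P)
    (hcont : Continuous fun u : ℝ => (P {ω | X ω ≤ u}).toReal)
    (htail : ∀ u : ℝ, 0 < (P {ω | u < X ω}).toReal)
    (w : ℝ → ℝ) (hw : Measurable w) (hwpos : ∀ u, 0 < w u)
    (hGumbel : ∀ x : ℝ, Tendsto (fun u : ℝ =>
        (P {ω | u + x / w u < X ω}).toReal
          / ((P {ω | u < X ω}).toReal * Real.exp (-x)))
      atTop (nhds 1)) :
    ∀ x : ℝ, Tendsto (fun u : ℝ =>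
        (P {ω | r ≤ (Finset.univ.filter fun i : Fin n =>
              u + x / (r * w u) < Xs i ω).card}).toReal
          / ((P {ω | r ≤ (Finset.univ.filter fun i : Fin n =>
              u < Xs i ω).card}).toReal * Real.exp (-x)))
      atTop (nhds 1) := by
  intro x
  classical
  have hn : 0 < n := lt_of_lt_of_le hr hrn
  set h : ℝ → ℝ := fun t => ∑ S ∈ Finset.univ.filter (fun S : Finset (Fin n) => r ≤ S.card),
      t ^ (S.card - r) * (1 - t) ^ (n - S.card) with hhdef
  have hA : ∀ v : ℝ, (P {ω | r ≤ (Finset.univ.filter fun i : Fin n => v < Xs i ω).card}).toReal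
      = (P {ω | v < X ω}).toReal ^ r * h ((P {ω | v < X ω}).toReal) :=
    fun v => countEvent_eq P n r X Xs hmeas hindep hident v
  have hhcont : Continuous h := continuous_finset_sum _ fun S _ =>
    (continuous_pow _).mul ((continuous_const.sub continuous_id).pow _)
  have hq_le_one : ∀ v : ℝ, (P {ω | v < X ω}).toReal ≤ 1 := fun v => by
    simpa using ENNReal.toReal_mono ENNReal.one_ne_top
      (prob_le_one (μ := P) (s := {ω | v < X ω}))
  have hhpos : ∀ t : ℝ, 0 < t → t ≤ 1 → 0 < h t := by
    intro t ht0 ht1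
    refine Finset.sum_pos'
      (fun S _ => mul_nonneg (pow_nonneg ht0.le _) (pow_nonneg (by linarith) _)) ?_
    refine ⟨Finset.univ, by simp [Finset.card_univ, hrn], ?_⟩
    simp only [Finset.card_univ, Fintype.card_fin, Nat.sub_self, pow_zero, mul_one]
    positivity
  have hh0 : 0 < h 0 := by
    obtain ⟨S₀, hS₀sub, hS₀card⟩ := Finset.exists_subset_card_eq (s := (Finset.univ : Finset (Fin n))) (n := r)
      (by simpa using hrn)
    refine Finset.sum_pos'
      (fun S _ => mul_nonneg (pow_nonneg le_rfl _) (pow_nonneg (by norm_num) _)) ?_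
    exact ⟨S₀, by simp [hS₀card], by simp [hS₀card]⟩
  have hXae : AEMeasurable X P := (hident ⟨0, hn⟩).aemeasurable_snd
  have htail0 : Tendsto (fun v : ℝ => P {ω | v < X ω}) atTop (nhds 0) := by
    have hmono : Antitone (fun v : ℝ => {ω | v < X ω}) :=
      fun a b hab ω hω => lt_of_le_of_lt hab hω
    have hIm := tendsto_measure_iInter_atTop (μ := P) (s := fun v : ℝ => {ω | v < X ω})
      (fun v => (hXae.nullMeasurable measurableSet_Ioi : _)) hmono ⟨0, measure_ne_top _ _⟩
    have hempty : ⋂ v : ℝ, {ω | v < X ω} = ∅ := by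
      ext ω
      simp only [Set.mem_iInter, Set.mem_setOf_eq, Set.mem_empty_iff_false, iff_false, not_forall,
        not_lt]
      exact ⟨X ω, le_rfl⟩
    rw [hempty, measure_empty] at hIm
    exact hIm
  have hq0 : Tendsto (fun v : ℝ => (P {ω | v < X ω}).toReal) atTop (nhds 0) := by
    have := (ENNReal.tendsto_toReal (by simp : (0 : ENNReal) ≠ ⊤)).comp htail0
    simpa [Function.comp_def] using this
  set x' : ℝ := x / r with hx'
  have hvrw : ∀ u : ℝ, u + x / (↑r * w u) = u + x' / w u := by
    intro u; rw [hx', div_div]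
  have hR : Tendsto (fun u : ℝ => (P {ω | u + x' / w u < X ω}).toReal
      / ((P {ω | u < X ω}).toReal * Real.exp (-x'))) atTop (nhds 1) := hGumbel x'
  have hq1 : Tendsto (fun u : ℝ => (P {ω | u + x' / w u < X ω}).toReal) atTop (nhds 0) := by
    have hlim := hR.mul (hq0.mul (tendsto_const_nhds (x := Real.exp (-x'))))
    have hlim' : Tendsto (fun u : ℝ => ((P {ω | u + x' / w u < X ω}).toReal
        / ((P {ω | u < X ω}).toReal * Real.exp (-x')))
        * ((P {ω | u < X ω}).toReal * Real.exp (-x'))) atTop (nhds 0) := by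
      simpa using hlim
    refine hlim'.congr fun u => ?_
    rw [div_mul_cancel₀]
    exact mul_ne_zero (htail u).ne' (Real.exp_ne_zero _)
  have hexp : Real.exp (-x') ^ r = Real.exp (-x) := by
    rw [← Real.exp_nat_mul]
    congr 1
    have hrne : (r : ℝ) ≠ 0 := Nat.cast_ne_zero.2 (by omega)
    rw [hx']
    field_simp
  have hmain : ∀ u : ℝ,
      (P {ω | r ≤ (Finset.univ.filter fun i : Fin n =>
          u + x / (r * w u) < Xs i ω).card}).toReal
        / ((P {ω | r ≤ (Finset.univ.filter fun i : Fin n => u < Xs i ω).card}).toReal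
            * Real.exp (-x))
      = ((P {ω | u + x' / w u < X ω}).toReal
            / ((P {ω | u < X ω}).toReal * Real.exp (-x'))) ^ r
        * (h ((P {ω | u + x' / w u < X ω}).toReal) / h ((P {ω | u < X ω}).toReal)) := by
    intro u
    rw [hvrw u, hA (u + x' / w u), hA u, div_pow, mul_pow, hexp]
    have hq0ne : (P {ω | u < X ω}).toReal ≠ 0 := (htail u).ne'
    have hhne : h ((P {ω | u < X ω}).toReal) ≠ 0 := (hhpos _ (htail u) (hq_le_one u)).ne'
    have hexne : Real.exp (-x) ≠ 0 := Real.exp_ne_zero _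
    field_simp
  have hfin := (hR.pow r).mul
    (((hhcont.tendsto 0).comp hq1).div ((hhcont.tendsto 0).comp hq0) hh0.ne')
  have hfin' : Tendsto (fun u : ℝ =>
      ((P {ω | u + x' / w u < X ω}).toReal
          / ((P {ω | u < X ω}).toReal * Real.exp (-x'))) ^ r
        * (h ((P {ω | u + x' / w u < X ω}).toReal) / h ((P {ω | u < X ω}).toReal)))
      atTop (nhds 1) := by
    simpa [div_self hh0.ne'] using hfin
  exact hfin'.congr fun u => (hmain u).symm
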